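/- Let X be a real Banach space and let (x_t)_{t∈2^{<ℕ}} be a sequence in X which is topologically equivalent to the basis of James tree. Then for every dyadic subtree D = {d_t : t ∈ 2^{<ℕ}} of 2^{<ℕ}, the sequence (x_{d_t})_{t∈2^{<ℕ}} is topologically equivalent to the basis of James tree. -/

import Mathlib

open Filter

/-- `s` is a strict initial segment (proper prefix) of `t` in the dyadic tree
`2^{<ℕ}` (realized as `List Bool`). -/
def StrictPrefix (s t : List Bool) : Prop := s <+: t ∧ s ≠ t

/-- For incomparable nodes: `s ≺ t` iff `(s ∧ t)⌢0 ⊑ s` and `(s ∧ t)⌢1 ⊑ t`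
where `s ∧ t` is the longest common initial segment of `s` and `t`
(equivalently, some common prefix `w` satisfies `w⌢0 ⊑ s` and `w⌢1 ⊑ t`). -/
def PrecRel (s t : List Bool) : Prop :=
  ∃ w : List Bool, (w ++ [false]) <+: s ∧ (w ++ [true]) <+: t

/-- A dyadic subtree of `2^{<ℕ}`: an injective indexing `d : 2^{<ℕ} → 2^{<ℕ}`
preserving and reflecting both `⊏` and `≺`. -/
def IsDyadicSubtree (d : List Bool → List Bool) : Prop :=
  Function.Injective d ∧
  (∀ t₀ t₁ : List Bool, StrictPrefix t₀ t₁ ↔ StrictPrefix (d t₀) (d t₁)) ∧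
  (∀ t₀ t₁ : List Bool, PrecRel t₀ t₁ ↔ PrecRel (d t₀) (d t₁))

/-- A sequence `(x t)_{t ∈ 2^{<ℕ}}` in a Banach space `X` is topologically
equivalent to the basis of James tree: it is semi-normalized; for every
infinite antichain (equivalently, every injective enumeration of pairwise
incomparable nodes) the corresponding sequence is weakly null; and for every
branch `σ ∈ 2^ℕ` the sequence `(x (σ|n))` is weak* convergent in the bidual to
an element `L σ` outside (the canonical image of) `X`, with distinct limits
for distinct branches. -/
def TopEquivJamesTree {X : Type*} [NormedAddCommGroup X] [NormedSpace ℝ X]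
    (x : List Bool → X) : Prop :=
  (∃ c C : ℝ, 0 < c ∧ c ≤ C ∧ ∀ t : List Bool, c ≤ ‖x t‖ ∧ ‖x t‖ ≤ C) ∧
  (∀ e : ℕ → List Bool, Function.Injective e →
    (∀ i j : ℕ, i ≠ j → ¬ (e i <+: e j) ∧ ¬ (e j <+: e i)) →
    ∀ f : X →L[ℝ] ℝ, Tendsto (fun n => f (x (e n))) atTop (nhds 0)) ∧
  (∃ L : (ℕ → Bool) → StrongDual ℝ (StrongDual ℝ X),
    (∀ (σ : ℕ → Bool) (f : StrongDual ℝ X),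
      Tendsto (fun n => f (x (List.ofFn fun i : Fin n => σ i))) atTop (nhds (L σ f))) ∧
    (∀ σ : ℕ → Bool, L σ ∉ Set.range (NormedSpace.inclusionInDoubleDual ℝ X)) ∧
    (∀ σ τ : ℕ → Bool, σ ≠ τ → L σ ≠ L τ))


/-- Initial segments of a branch form a prefix chain. -/
lemma ofFn_prefix_aux (σ : ℕ → Bool) {m n : ℕ} (h : m ≤ n) :
    (List.ofFn fun i : Fin m => σ i) <+: (List.ofFn fun i : Fin n => σ i) := by
  rw [List.prefix_iff_eq_take]
  apply List.ext_getElem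
  · simp [Nat.min_eq_left h]
  · intro i h1 h2
    simp [List.getElem_take]

/-- Every strictly increasing chain of finite sequences lies along a branch. -/
lemma chain_rep_aux (y : ℕ → List Bool) (hy : ∀ n, StrictPrefix (y n) (y (n + 1))) :
    ∃ τ : ℕ → Bool, ∀ n, y n = List.ofFn (fun i : Fin (y n).length => τ i) := by
  have hmono : StrictMono fun n => (y n).length := by
    apply strictMono_nat_of_lt_succ
    intro n
    exact lt_of_le_of_ne (hy n).1.length_le fun he =>
      (hy n).2 ((hy n).1.eq_of_length he)
  have hchain : ∀ m n, m ≤ n → y m <+: y n := by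
    intro m n h
    induction n with
    | zero => simp_all
    | succ k ih =>
      rcases Nat.lt_or_ge m (k + 1) with h' | h'
      · exact (ih (Nat.lt_succ_iff.mp h')).trans (hy k).1
      · have : m = k + 1 := le_antisymm h h'
        subst this; exact List.prefix_rfl
  have hlen : ∀ k : ℕ, k < (y (k + 1)).length := fun k =>
    lt_of_lt_of_le (Nat.lt_succ_self k) (hmono.le_apply)
  refine ⟨fun k => (y (k + 1)).getD k false, fun n => ?_⟩
  apply List.ext_getElem
  · simp
  · intro i h1 h2
    simp only [List.getElem_ofFn, List.getD_eq_getElem _ _ (hlen i)]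
    rcases Nat.le_total n (i + 1) with h | h
    · exact (hchain n (i + 1) h).getElem h1
    · exact ((hchain (i + 1) n h).getElem (hlen i)).symm

/-- A dyadic subtree map sends pairs that are neither equal nor comparable
to non-prefixes. -/
lemma subtree_not_prefix {d : List Bool → List Bool} (hd : IsDyadicSubtree d)
    {a b : List Bool} (hne : a ≠ b) (hab : ¬ a <+: b) : ¬ d a <+: d b := by
  intro hp
  by_cases he : d a = d b
  · exact hne (hd.1 he)
  · exact hab ((hd.2.1 a b).mpr ⟨hp, he⟩).1

/-- If `(x t)` is topologically equivalent to the basis of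
James tree, then so is its restriction `(x (d t))` to any dyadic subtree. -/
theorem stmt_11 {X : Type*} [NormedAddCommGroup X] [NormedSpace ℝ X] [CompleteSpace X]
    (x : List Bool → X) (hx : TopEquivJamesTree x)
    (d : List Bool → List Bool) (hd : IsDyadicSubtree d) :
    TopEquivJamesTree (fun t => x (d t)) := by
  obtain ⟨⟨c, C, hc, hcC, hbound⟩, hanti, L, hL1, hL2, hL3⟩ := hx
  refine ⟨⟨c, C, hc, hcC, fun t => hbound (d t)⟩, ?_, ?_⟩
  · -- antichains
    intro e he hinc f
    refine hanti (fun n => d (e n)) (hd.1.comp he) ?_ f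
    intro i j hij
    constructor
    · exact subtree_not_prefix hd (fun h => hij (he h)) (hinc i j hij).1
    · exact subtree_not_prefix hd (fun h => hij (he h).symm) (hinc i j hij).2
  · -- branches
    have hchain : ∀ σ : ℕ → Bool, ∀ n : ℕ,
        StrictPrefix (d (List.ofFn fun i : Fin n => σ i))
          (d (List.ofFn fun i : Fin (n + 1) => σ i)) := by
      intro σ n
      refine (hd.2.1 _ _).mp ⟨ofFn_prefix_aux σ (Nat.le_succ n), ?_⟩
      intro h
      have := congrArg List.length h
      simp at this
    have hrep : ∀ σ : ℕ → Bool, ∃ τ : ℕ → Bool, ∀ n,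
        d (List.ofFn fun i : Fin n => σ i) =
          List.ofFn (fun i : Fin (d (List.ofFn fun i : Fin n => σ i)).length => τ i) :=
      fun σ => chain_rep_aux _ (hchain σ)
    choose T hT using hrep
    have hlenmono : ∀ σ : ℕ → Bool,
        StrictMono fun n => (d (List.ofFn fun i : Fin n => σ i)).length := by
      intro σ
      apply strictMono_nat_of_lt_succ
      intro n
      exact lt_of_le_of_ne (hchain σ n).1.length_le fun he =>
        (hchain σ n).2 ((hchain σ n).1.eq_of_length he)
    refine ⟨fun σ => L (T σ), ?_, fun σ => hL2 (T σ), ?_⟩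
    · intro σ f
      have h1 := (hL1 (T σ) f).comp ((hlenmono σ).tendsto_atTop)
      refine h1.congr fun n => ?_
      simp only [Function.comp]
      rw [← hT σ n]
    · -- distinct branches give distinct limits
      intro σ τ hst
      apply hL3
      intro hTT
      obtain ⟨n, hn⟩ : ∃ n, σ n ≠ τ n := by
        by_contra h
        push_neg at h
        exact hst (funext h)
      set a := List.ofFn fun i : Fin (n + 1) => σ i with ha
      set b := List.ofFn fun i : Fin (n + 1) => τ i with hb
      have hga : ∀ ρ : ℕ → Bool,
          (List.ofFn fun i : Fin (n + 1) => ρ i).getD n false = ρ n := by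
        intro ρ
        rw [List.getD_eq_getElem _ _ (by simp [Nat.lt_succ_self]), List.getElem_ofFn]
      have hab : a ≠ b := by
        intro h
        refine hn ?_
        rw [← hga σ, ← hga τ]
        exact congrArg (fun l => l.getD n false) h
      have hdab : d a ≠ d b := fun h => hab (hd.1 h)
      -- both d a and d b are initial segments of the same branch T σ = T τ
      have hda := hT σ (n + 1)
      have hdb := hT τ (n + 1)
      rw [← hTT] at hdb
      have hcomp : d a <+: d b ∨ d b <+: d a := by
        rcases Nat.le_total (d a).length (d b).length with h | h
        · left; rw [hda, hdb]; exact ofFn_prefix_aux (T σ) h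
        · right; rw [hda, hdb]; exact ofFn_prefix_aux (T σ) h
      have hablen : a.length = b.length := by simp [ha, hb]
      rcases hcomp with h | h
      · have : StrictPrefix a b := (hd.2.1 a b).mpr ⟨h, hdab⟩
        exact hab (this.1.eq_of_length hablen)
      · have : StrictPrefix b a := (hd.2.1 b a).mpr ⟨h, fun h' => hdab h'.symm⟩
        exact hab (this.1.eq_of_length hablen.symm).symm
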